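/- Let 𝒜 be a complete normed ring (a real Banach algebra with unit), let a, b ∈ 𝒜 and t ∈ ℝ. Define X : ℕ → 𝒜 by X₀ = 1 and X_m = b·X_{m−1} + (a·X_{m−1} − X_{m−1}·a) for m ≥ 1. Then the Kantorovitz series converges and represents the exponential of t(a+b): HasSum (fun m ↦ (t^m / m!) • (X_m · exp(t • a))) (exp(t • (a + b))). -/

import Mathlib

open NormedSpace

private lemma exp_mulLeft_apply {𝒜 : Type*} [NormedRing 𝒜] [NormedAlgebra ℝ 𝒜]
    [CompleteSpace 𝒜] (c x : 𝒜) :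
    exp (ContinuousLinearMap.mul ℝ 𝒜 c) x = exp c * x := by
  have h1 := (exp_series_hasSum_exp' (𝕂 := ℝ) (ContinuousLinearMap.mul ℝ 𝒜 c)).mapL
    (ContinuousLinearMap.apply ℝ 𝒜 x)
  have h2 := (exp_series_hasSum_exp' (𝕂 := ℝ) c).mul_right x
  refine h1.unique ?_
  convert h2 using 2 with n
  on_goal 1 => rfl
  have : (ContinuousLinearMap.mul ℝ 𝒜 c) ^ n = ContinuousLinearMap.mul ℝ 𝒜 (c ^ n) := by
    induction n with
    | zero => ext y; simp
    | succ k ih => ext y; simp [pow_succ, ih, mul_assoc]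
  simp [this, smul_mul_assoc]

private lemma exp_mulRight_apply {𝒜 : Type*} [NormedRing 𝒜] [NormedAlgebra ℝ 𝒜]
    [CompleteSpace 𝒜] (d x : 𝒜) :
    exp ((ContinuousLinearMap.mul ℝ 𝒜).flip d) x = x * exp d := by
  have h1 := (exp_series_hasSum_exp' (𝕂 := ℝ) ((ContinuousLinearMap.mul ℝ 𝒜).flip d)).mapL
    (ContinuousLinearMap.apply ℝ 𝒜 x)
  have h2 := (exp_series_hasSum_exp' (𝕂 := ℝ) d).mul_left x
  refine h1.unique ?_
  convert h2 using 2 with n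
  on_goal 1 => rfl
  have : ((ContinuousLinearMap.mul ℝ 𝒜).flip d) ^ n
      = (ContinuousLinearMap.mul ℝ 𝒜).flip (d ^ n) := by
    induction n with
    | zero => ext y; simp
    | succ k ih =>
      ext y
      simp only [pow_succ, ContinuousLinearMap.mul_apply, ih,
        ContinuousLinearMap.flip_apply, ContinuousLinearMap.mul_apply']
      rw [mul_assoc, ← pow_succ', pow_succ]
  simp [this, mul_smul_comm]

theorem kantorovitz_series {𝒜 : Type*} [NormedRing 𝒜] [NormedAlgebra ℝ 𝒜]
    [CompleteSpace 𝒜] (a b : 𝒜) (t : ℝ) (X : ℕ → 𝒜)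
    (hX0 : X 0 = 1)
    (hX : ∀ m : ℕ, X (m + 1) = b * X m + (a * X m - X m * a)) :
    HasSum (fun m : ℕ => (t ^ m / m.factorial : ℝ) • (X m * exp (t • a)))
      (exp (t • (a + b))) := by
  set A : 𝒜 →L[ℝ] 𝒜 := ContinuousLinearMap.mul ℝ 𝒜 (t • (a + b)) with hA
  set B : 𝒜 →L[ℝ] 𝒜 := (ContinuousLinearMap.mul ℝ 𝒜).flip (-(t • a)) with hB
  set T : 𝒜 →L[ℝ] 𝒜 := A + B with hT
  -- powers of T at 1 give t^n • X n
  have hpow : ∀ n : ℕ, (T ^ n) 1 = t ^ n • X n := by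
    intro n
    induction n with
    | zero => simp [hX0]
    | succ k ih =>
      have hTX : T (X k) = t • X (k + 1) := by
        rw [hX k]
        simp only [hT, hA, hB, ContinuousLinearMap.add_apply,
          ContinuousLinearMap.flip_apply, ContinuousLinearMap.mul_apply']
        rw [smul_mul_assoc, mul_neg, mul_smul_comm, ← smul_neg, ← smul_add]
        congr 1
        noncomm_ring
      rw [pow_succ', ContinuousLinearMap.mul_apply, ih, map_smul, hTX, smul_smul, ← pow_succ]
  -- exp T at 1
  have hcomm : Commute A B := by
    refine ContinuousLinearMap.ext fun y => ?_
    simp only [hA, hB, ContinuousLinearMap.mul_apply, ContinuousLinearMap.coe_mul,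
      Function.comp_apply, ContinuousLinearMap.flip_apply, ContinuousLinearMap.mul_apply']
    rw [mul_assoc]
  have hexpT : (exp T) 1 = exp (t • (a + b)) * exp (-(t • a)) := by
    rw [hT, exp_add_of_commute_of_mem_ball (𝕂 := ℝ) hcomm
        ((expSeries_radius_eq_top ℝ (𝒜 →L[ℝ] 𝒜)).symm ▸ edist_lt_top _ _)
        ((expSeries_radius_eq_top ℝ (𝒜 →L[ℝ] 𝒜)).symm ▸ edist_lt_top _ _), ContinuousLinearMap.mul_apply,
      exp_mulRight_apply, one_mul, exp_mulLeft_apply]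
  -- the series for exp T evaluated at 1
  have h1 := (exp_series_hasSum_exp' (𝕂 := ℝ) T).mapL (ContinuousLinearMap.apply ℝ 𝒜 1)
  have h2 : HasSum (fun n : ℕ => (t ^ n / n.factorial : ℝ) • X n)
      (exp (t • (a + b)) * exp (-(t • a))) := by
    rw [← hexpT]
    convert h1 using 2 with n
    on_goal 1 => rfl
    simp [hpow n, smul_smul, div_eq_inv_mul]
    rfl
  have h3 := h2.mul_right (exp (t • a))
  have key : exp (t • (a + b)) * exp (-(t • a)) * exp (t • a) = exp (t • (a + b)) := by
    rw [mul_assoc, ← exp_add_of_commute_of_mem_ball (𝕂 := ℝ) (Commute.refl (t • a)).neg_left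
        ((expSeries_radius_eq_top ℝ 𝒜).symm ▸ edist_lt_top _ _)
        ((expSeries_radius_eq_top ℝ 𝒜).symm ▸ edist_lt_top _ _), neg_add_cancel,
      exp_zero, mul_one]
  rw [key] at h3
  convert h3 using 2 with n
  on_goal 1 => rfl
  rw [smul_mul_assoc]
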